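/- Let n ≥ 1 and let f : Y → X be an Esakia morphism between Esakia spaces of width at most n such that (i) Y has a minimum element ⊥, and (ii) for every z ∈ X distinct from the maximum of X (if it exists), if f(⊥) < z then z belongs to an antichain of n elements contained in ↑f(⊥). Then, writing ↑f(⊥)^⊤ for ↑f(⊥) with the maximum of X (if any) removed, there is a subposet Z of Y such that the restriction of f to Z is a poset isomorphism onto ↑f(⊥)^⊤. -/
import Mathlib


/- STATEMENT 11: The "trick-width" lemma. Let n ≥ 1 and f : Y → X an Esakia morphism
between Esakia spaces of width at most n such that Y has a minimum ⊥ and every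
non-maximal z > f(⊥) lies in an n-element antichain contained in ↑f(⊥). Then some
subposet Z of Y is mapped by f isomorphically onto ↑f(⊥) minus the maximum of X. -/

/-- An Esakia space: a Stone space equipped with a partial order such that principal
upsets are closed and the down-closure of a clopen set is clopen. -/
structure EsaSpace where
  carrier : Type
  [topSp : TopologicalSpace carrier]
  [ord : PartialOrder carrier]
  compact : CompactSpace carrier
  t2 : T2Space carrier
  zeroDim : ∀ U : Set carrier, IsOpen U →
    ∃ S : Set (Set carrier), (∀ V ∈ S, IsClopen V) ∧ U = ⋃₀ S
  ici_closed : ∀ x : carrier, IsClosed (Set.Ici x)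
  down_clopen : ∀ U : Set carrier, IsClopen U →
    IsClopen (↑(lowerClosure U) : Set carrier)

attribute [instance] EsaSpace.topSp EsaSpace.ord

/-- An Esakia morphism: continuous, order preserving, satisfying the back condition. -/
structure EsaHom (X Y : EsaSpace) where
  toFun : X.carrier → Y.carrier
  continuous : Continuous toFun
  monotone : Monotone toFun
  up : ∀ (x : X.carrier) (y : Y.carrier), toFun x ≤ y → ∃ z, x ≤ z ∧ toFun z = y

/-- The space has width at most n: no upset ↑x contains an antichain of n+1 elements. -/
def EsaSpace.WidthAtMost (X : EsaSpace) (n : ℕ) : Prop :=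
  ∀ (x : X.carrier) (g : Fin (n + 1) → X.carrier),
    (∀ i, x ≤ g i) → (∀ i j, i ≠ j → ¬ g i ≤ g j) → False

theorem trick_width (n : ℕ) (hn : 1 ≤ n) (X Y : EsaSpace)
    (hX : X.WidthAtMost n) (hY : Y.WidthAtMost n)
    (f : EsaHom Y X)
    (bot : Y.carrier) (hbot : ∀ y, bot ≤ y)
    (hii : ∀ z : X.carrier, ¬ IsTop z → f.toFun bot < z →
      ∃ g : Fin n → X.carrier, (∀ i, f.toFun bot ≤ g i) ∧
        (∀ i j, i ≠ j → ¬ g i ≤ g j) ∧ ∃ i, g i = z) :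
    ∃ Z : Set Y.carrier,
      Set.BijOn f.toFun Z {w | f.toFun bot ≤ w ∧ ¬ IsTop w} ∧
      ∀ z₁ ∈ Z, ∀ z₂ ∈ Z, (z₁ ≤ z₂ ↔ f.toFun z₁ ≤ f.toFun z₂) := by
  classical
  haveI := Y.compact
  haveI := X.t2
  set b := f.toFun bot with hb
  -- fibers over non-top z > b are chains
  have chainFib : ∀ z : X.carrier, ¬ IsTop z → b < z → ∀ y₁ y₂ : Y.carrier,
      f.toFun y₁ = z → f.toFun y₂ = z → y₁ ≤ y₂ ∨ y₂ ≤ y₁ := by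
    intro z hzt hbz y₁ y₂ h1 h2
    by_contra hcon
    push_neg at hcon
    obtain ⟨h12, h21⟩ := hcon
    obtain ⟨g, hg1, hg2, i₀, hgi₀⟩ := hii z hzt hbz
    choose w hw1 hw2 using fun i => f.up bot (g i) (hg1 i)
    set w' : Fin n → Y.carrier := fun j => if j = i₀ then y₁ else w j with hw'
    have hfw' : ∀ j, f.toFun (w' j) = g j := by
      intro j
      by_cases hj : j = i₀ <;> simp [hw', hj, hw2, hgi₀, h1]
    set h : Fin (n + 1) → Y.carrier := Fin.snoc w' y₂ with hh
    refine hY bot h (fun i => hbot _) ?_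
    intro i j hij hle
    induction i using Fin.lastCases with
    | last =>
      induction j using Fin.lastCases with
      | last => exact hij rfl
      | cast j' =>
        have : f.toFun y₂ ≤ g j' := by
          have := f.monotone hle
          simpa [hh, Fin.snoc_last, Fin.snoc_castSucc, hfw'] using this
        rw [h2] at this
        by_cases hj : j' = i₀
        · subst hj; rw [hgi₀] at this
          exact h21 (by simpa [hh, Fin.snoc_last, Fin.snoc_castSucc, hw'] using hle)
        · exact hg2 i₀ j' (fun e => hj e.symm) (hgi₀ ▸ this)
    | cast i' =>
      induction j using Fin.lastCases with
      | last =>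
        have : g i' ≤ f.toFun y₂ := by
          have := f.monotone hle
          simpa [hh, Fin.snoc_last, Fin.snoc_castSucc, hfw'] using this
        rw [h2] at this
        by_cases hi : i' = i₀
        · subst hi
          exact h12 (by simpa [hh, Fin.snoc_last, Fin.snoc_castSucc, hw'] using hle)
        · exact hg2 i' i₀ hi (hgi₀ ▸ this)
      | cast j' =>
        have hne : i' ≠ j' := fun e => hij (by rw [e])
        have : g i' ≤ g j' := by
          have := f.monotone hle
          simpa [hh, Fin.snoc_castSucc, hfw'] using this
        exact hg2 i' j' hne this
  -- closed nonempty chain fibers have maxima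
  have maxFib : ∀ z : X.carrier, ¬ IsTop z → b < z →
      ∃ m : Y.carrier, f.toFun m = z ∧ ∀ y, f.toFun y = z → y ≤ m := by
    intro z hzt hbz
    set F : Set Y.carrier := f.toFun ⁻¹' {z} with hF
    have hFc : IsClosed F := (isClosed_singleton).preimage f.continuous
    obtain ⟨y0, -, hy0⟩ := f.up bot z hbz.le
    have hy0F : y0 ∈ F := hy0
    haveI : Nonempty F := ⟨⟨y0, hy0F⟩⟩
    set U : F → Set Y.carrier := fun c => Set.Ici c.1 ∩ F with hU
    have hne : ∀ c, (U c).Nonempty := fun c => ⟨c.1, le_refl _, c.2⟩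
    have hdir : Directed (· ⊇ ·) U := by
      intro c d
      rcases chainFib z hzt hbz c.1 d.1 c.2 d.2 with hcd | hdc
      · exact ⟨d, fun x hx => ⟨le_trans hcd hx.1, hx.2⟩, fun x hx => hx⟩
      · exact ⟨c, fun x hx => hx, fun x hx => ⟨le_trans hdc hx.1, hx.2⟩⟩
    have hcl : ∀ c, IsClosed (U c) := fun c => (Y.ici_closed c.1).inter hFc
    have hcp : ∀ c, IsCompact (U c) := fun c => (hcl c).isCompact
    obtain ⟨m, hm⟩ := IsCompact.nonempty_iInter_of_directed_nonempty_isCompact_isClosed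
      U hdir hne hcp hcl
    simp only [Set.mem_iInter] at hm
    have hmF : m ∈ F := (hm ⟨y0, hy0F⟩).2
    exact ⟨m, hmF, fun y hy => (hm ⟨y, hy⟩).1⟩
  -- the cross-section
  refine ⟨{y | (y = bot ∧ ¬ IsTop b) ∨
      (b < f.toFun y ∧ ¬ IsTop (f.toFun y) ∧ ∀ y', f.toFun y' = f.toFun y → y' ≤ y)}, ⟨?_, ?_, ?_⟩, ?_⟩
  · -- MapsTo
    rintro y (⟨rfl, hbt⟩ | ⟨hlt, htop, -⟩)
    · exact ⟨le_refl _, hbt⟩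
    · exact ⟨hlt.le, htop⟩
  · -- InjOn
    rintro y₁ (⟨rfl, -⟩ | ⟨hlt₁, -, hmax₁⟩) y₂ (⟨rfl, -⟩ | ⟨hlt₂, -, hmax₂⟩) he
    · rfl
    · rw [← he] at hlt₂; exact absurd hlt₂ (lt_irrefl _)
    · exact absurd (he ▸ hlt₁ : b < f.toFun y₂) (lt_irrefl b)
    · exact le_antisymm (hmax₂ y₁ he) (hmax₁ y₂ he.symm)
  · -- SurjOn
    rintro z ⟨hbz, hzt⟩
    rcases eq_or_lt_of_le hbz with rfl | hlt
    · exact ⟨bot, Or.inl ⟨rfl, hzt⟩, rfl⟩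
    · obtain ⟨m, hm1, hm2⟩ := maxFib z hzt hlt
      exact ⟨m, Or.inr ⟨hm1 ▸ hlt, hm1 ▸ hzt, fun y' hy' => hm2 y' (hm1 ▸ hy')⟩, hm1⟩
  · -- order reflecting
    rintro y₁ (⟨rfl, -⟩ | ⟨hlt₁, -, hmax₁⟩) y₂ hy₂
    · exact ⟨fun _ => f.monotone (hbot y₂), fun _ => hbot y₂⟩
    · refine ⟨fun h => f.monotone h, fun h => ?_⟩
      rcases hy₂ with ⟨rfl, -⟩ | ⟨hlt₂, -, hmax₂⟩
      · exact absurd (lt_of_lt_of_le hlt₁ h) (lt_irrefl b)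
      · obtain ⟨w, hw1, hw2⟩ := f.up y₁ (f.toFun y₂) h
        exact le_trans hw1 (hmax₂ w hw2)
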